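/- (Theorem 3.2, high-probability generalization bound.) Let ξ₁,…,ξ_N be i.i.d. samples from P*, P̂_N their empirical measure, τ_ε := (1+ε)·inf_{x∈𝒳} E_{P̂_N}[h(x,ξ)] (a.s. finite), and (x̂_N, k̂_N) a random pair that is a.s. RS-feasible for τ_ε with respect to P̂_N. Suppose r_N > 0 and β_N ∈ (0,1) satisfy P{ d_W(P*, P̂_N) > r_N } ≤ β_N. Then with probability at least 1 − β_N: E_{P*}[h(x̂_N,ξ)] − J* ≤ ε·J* + (2+ε)·L·r_N, where J* := inf_{x∈𝒳} E_{P*}[h(x,ξ)] is assumed finite. -/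

import Mathlib

open MeasureTheory

noncomputable section

abbrev Vec (m : ℕ) := EuclideanSpace ℝ (Fin m)

/-- A coupling of two Borel probability measures on `Vec m`. -/
def IsCoupling {m : ℕ} (γ : Measure (Vec m × Vec m)) (P Q : Measure (Vec m)) : Prop :=
  IsProbabilityMeasure γ ∧ γ.map Prod.fst = P ∧ γ.map Prod.snd = Q

/-- Type-1 Wasserstein distance: infimum of `∫ ‖ξ₁ - ξ₂‖₂ dγ` over couplings `γ`. -/
noncomputable def wDist {m : ℕ} (P Q : Measure (Vec m)) : ℝ :=
  sInf {c : ℝ | ∃ γ : Measure (Vec m × Vec m), IsCoupling γ P Q ∧ c = ∫ p, ‖p.1 - p.2‖ ∂γ}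

/-- `(x, k)` is RS-feasible for reference value `τ` with respect to `Phat`. -/
def RSFeasible {m : ℕ} {X : Type*} (h : X → Vec m → ℝ)
    (Phat : Measure (Vec m)) (τ : ℝ) (x : X) (k : ℝ) : Prop :=
  0 ≤ k ∧ ∀ P : Measure (Vec m), IsProbabilityMeasure P →
    Integrable (fun ξ => ‖ξ‖) P → (∫ ξ, h x ξ ∂P) - τ ≤ k * wDist P Phat

/-- Empirical measure `(1/N) ∑ δ_{x i}`. -/
noncomputable def empMeas {m N : ℕ} (xs : Fin N → Vec m) : Measure (Vec m) :=
  (N : ENNReal)⁻¹ • ∑ i : Fin N, Measure.dirac (xs i)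


lemma integrable_dirac'' {α E : Type*} [MeasurableSpace α] [MeasurableSingletonClass α]
    [NormedAddCommGroup E] {f : α → E} (hf : StronglyMeasurable f) (a : α) :
    Integrable f (Measure.dirac a) :=
  ⟨hf.aestronglyMeasurable, by simp [HasFiniteIntegral, lintegral_dirac]⟩

lemma empMeas_prob {m N : ℕ} (hN : 0 < N) (xs : Fin N → Vec m) :
    IsProbabilityMeasure (empMeas xs) := by
  constructor
  simp only [empMeas, Measure.smul_apply, Measure.coe_finset_sum, Finset.sum_apply,
    Measure.dirac_apply_of_mem (Set.mem_univ _), Finset.sum_const, Finset.card_univ,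
    Fintype.card_fin, nsmul_eq_mul, mul_one, smul_eq_mul]
  rw [ENNReal.inv_mul_cancel (by exact_mod_cast hN.ne') (by simp)]

lemma empMeas_integrable {m N : ℕ} (hN : 0 < N) {f : Vec m → ℝ} (hf : StronglyMeasurable f)
    (xs : Fin N → Vec m) : Integrable f (empMeas xs) := by
  refine Integrable.smul_measure ?_ (ENNReal.inv_ne_top.2 (by exact_mod_cast hN.ne'))
  exact integrable_finset_sum_measure.2 fun i _ => integrable_dirac'' hf _

lemma cost_nonneg {m : ℕ} {P Q : Measure (Vec m)} {c : ℝ}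
    (hc : c ∈ {c : ℝ | ∃ γ : Measure (Vec m × Vec m), IsCoupling γ P Q ∧
      c = ∫ p, ‖p.1 - p.2‖ ∂γ}) : 0 ≤ c := by
  obtain ⟨γ, _, rfl⟩ := hc
  exact integral_nonneg fun p => norm_nonneg _

lemma wDist_self_nonpos {m : ℕ} (Q : Measure (Vec m)) [IsProbabilityMeasure Q] :
    wDist Q Q ≤ 0 := by
  have hd : Measurable fun x : Vec m => (x, x) := measurable_id.prodMk measurable_id
  refine csInf_le ⟨0, fun c hc => cost_nonneg hc⟩ ?_
  refine ⟨Q.map (fun x => (x, x)), ⟨?_, ?_, ?_⟩, ?_⟩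
  · exact Measure.isProbabilityMeasure_map hd.aemeasurable
  · rw [Measure.map_map measurable_fst hd]; simp [Function.comp_def]
  · rw [Measure.map_map measurable_snd hd]; simp [Function.comp_def]
  · rw [integral_map hd.aemeasurable (f := fun p : Vec m × Vec m => ‖p.1 - p.2‖) (continuous_fst.sub continuous_snd).norm.aestronglyMeasurable]
    simp

lemma integrable_fst' {m : ℕ} {γ : Measure (Vec m × Vec m)} {P : Measure (Vec m)}
    (h1 : γ.map Prod.fst = P) {g : Vec m → ℝ} (hg : Continuous g) (hi : Integrable g P) :
    Integrable (fun p : Vec m × Vec m => g p.1) γ := by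
  rw [← h1] at hi
  exact (integrable_map_measure hg.aestronglyMeasurable measurable_fst.aemeasurable).1 hi

lemma integrable_snd' {m : ℕ} {γ : Measure (Vec m × Vec m)} {Q : Measure (Vec m)}
    (h2 : γ.map Prod.snd = Q) {g : Vec m → ℝ} (hg : Continuous g) (hi : Integrable g Q) :
    Integrable (fun p : Vec m × Vec m => g p.2) γ := by
  rw [← h2] at hi
  exact (integrable_map_measure hg.aestronglyMeasurable measurable_snd.aemeasurable).1 hi

lemma abs_integral_sub_le_wDist {m : ℕ} {g : Vec m → ℝ} (hg : Continuous g)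
    {L : ℝ} (hL : 0 ≤ L) (hLip : ∀ ξ η, |g ξ - g η| ≤ L * ‖ξ - η‖)
    (P Q : Measure (Vec m)) [IsProbabilityMeasure P] [IsProbabilityMeasure Q]
    (hPm : Integrable (fun ξ => ‖ξ‖) P) (hQm : Integrable (fun ξ => ‖ξ‖) Q)
    (hiP : Integrable g P) (hiQ : Integrable g Q) :
    |∫ ξ, g ξ ∂P - ∫ ξ, g ξ ∂Q| ≤ L * wDist P Q := by
  set S := {c : ℝ | ∃ γ : Measure (Vec m × Vec m), IsCoupling γ P Q ∧
      c = ∫ p, ‖p.1 - p.2‖ ∂γ} with hS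
  have key : ∀ c ∈ S, |∫ ξ, g ξ ∂P - ∫ ξ, g ξ ∂Q| ≤ L * c := by
    rintro c ⟨γ, ⟨hγp, hγ1, hγ2⟩, rfl⟩
    have i1 : Integrable (fun p : Vec m × Vec m => g p.1) γ := integrable_fst' hγ1 hg hiP
    have i2 : Integrable (fun p : Vec m × Vec m => g p.2) γ := integrable_snd' hγ2 hg hiQ
    have n1 : Integrable (fun p : Vec m × Vec m => ‖p.1‖) γ :=
      integrable_fst' hγ1 continuous_norm hPm
    have n2 : Integrable (fun p : Vec m × Vec m => ‖p.2‖) γ :=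
      integrable_snd' hγ2 continuous_norm hQm
    have hcost : Integrable (fun p : Vec m × Vec m => ‖p.1 - p.2‖) γ := by
      refine (n1.add n2).mono' ((continuous_fst.sub continuous_snd).norm.aestronglyMeasurable)
        (ae_of_all _ fun p => ?_)
      simp only [Real.norm_eq_abs, abs_of_nonneg (norm_nonneg _)]
      exact norm_sub_le _ _
    have e1 : ∫ ξ, g ξ ∂P = ∫ p, g p.1 ∂γ := by
      rw [← hγ1, integral_map measurable_fst.aemeasurable hg.aestronglyMeasurable]
    have e2 : ∫ ξ, g ξ ∂Q = ∫ p, g p.2 ∂γ := by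
      rw [← hγ2, integral_map measurable_snd.aemeasurable hg.aestronglyMeasurable]
    rw [e1, e2, ← integral_sub i1 i2]
    calc |∫ p, (g p.1 - g p.2) ∂γ| ≤ ∫ p, |g p.1 - g p.2| ∂γ := by
          simpa [Real.norm_eq_abs] using
            norm_integral_le_integral_norm (μ := γ) fun p : Vec m × Vec m => g p.1 - g p.2
      _ ≤ ∫ p, L * ‖p.1 - p.2‖ ∂γ :=
        integral_mono (i1.sub i2).abs (hcost.const_mul L) fun p => hLip p.1 p.2
      _ = L * ∫ p, ‖p.1 - p.2‖ ∂γ := integral_const_mul L _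
  have hne : S.Nonempty := by
    refine ⟨_, ⟨P.prod Q, ⟨inferInstance, ?_, ?_⟩, rfl⟩⟩
    · simp
    · simp
  rcases eq_or_lt_of_le hL with hL0 | hLpos
  · obtain ⟨c, hc⟩ := hne
    have := key c hc
    rw [← hL0] at this ⊢
    simpa using this
  · rw [← div_le_iff₀' hLpos]
    refine le_csInf hne fun c hc => ?_
    rw [div_le_iff₀' hLpos]
    exact key c hc

/-- Theorem 3.2, high-probability generalization bound: with probability
at least 1 - beta_N, E_{P*}[h(xhat_N,.)] - J* <= eps J* + (2+eps) L r_N. -/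
theorem high_probability_generalization_bound {m N : ℕ} (hN : 0 < N)
    {X : Type*} [Nonempty X]
    {Ω : Type*} [MeasurableSpace Ω] (μ : Measure Ω) [IsProbabilityMeasure μ]
    (h : X → Vec m → ℝ) (L : ℝ) (hL : 0 ≤ L)
    (hLip : ∀ x ξ η, |h x ξ - h x η| ≤ L * ‖ξ - η‖)
    (hInt : ∀ x (P : Measure (Vec m)), IsProbabilityMeasure P →
      Integrable (fun ξ => ‖ξ‖) P → Integrable (h x) P)
    (Pstar : Measure (Vec m)) [IsProbabilityMeasure Pstar]
    (hPstarmom : Integrable (fun ξ => ‖ξ‖) Pstar)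
    -- i.i.d. samples from Pstar
    (ξs : Fin N → Ω → Vec m) (hmeas : ∀ i, Measurable (ξs i))
    (hindep : ProbabilityTheory.iIndepFun ξs μ)
    (hdist : ∀ i, μ.map (ξs i) = Pstar)
    -- empirical measure
    (Phat : Ω → Measure (Vec m)) (hPhat : ∀ ω, Phat ω = empMeas (fun i => ξs i ω))
    -- reference value
    (ε : ℝ) (hε : 0 < ε)
    (τ : Ω → ℝ) (hτ : ∀ ω, τ ω = (1 + ε) * ⨅ x, ∫ ξ, h x ξ ∂(Phat ω))
    (hfin : ∀ᵐ ω ∂μ, BddBelow (Set.range fun x => ∫ ξ, h x ξ ∂(Phat ω)))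
    (hfinPstar : BddBelow (Set.range fun x => ∫ ξ, h x ξ ∂Pstar))
    -- almost surely RS-feasible random pair
    (xhat : Ω → X) (khat : Ω → ℝ)
    (hfeas : ∀ᵐ ω ∂μ, RSFeasible h (Phat ω) (τ ω) (xhat ω) (khat ω))
    -- concentration of the empirical measure
    (r β : ℝ) (hr : 0 < r) (hβ0 : 0 < β) (hβ1 : β < 1)
    (htail : μ {ω | r < wDist Pstar (Phat ω)} ≤ ENNReal.ofReal β) :
    ENNReal.ofReal (1 - β) ≤
      μ {ω | (∫ ξ, h (xhat ω) ξ ∂Pstar) - (⨅ x, ∫ ξ, h x ξ ∂Pstar) ≤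
               ε * (⨅ x, ∫ ξ, h x ξ ∂Pstar) + (2 + ε) * L * r} := by
    classical
  set J : ℝ := ⨅ x, ∫ ξ, h x ξ ∂Pstar with hJ
  set G : Set Ω := {ω | (∫ ξ, h (xhat ω) ξ ∂Pstar) - J ≤ ε * J + (2 + ε) * L * r} with hG
  set T : Set Ω := {ω | r < wDist Pstar (Phat ω)} with hT
  have hcont : ∀ x, Continuous (h x) := by
    intro x
    have hlw : LipschitzWith (Real.toNNReal L) (h x) := by
      refine LipschitzWith.of_dist_le_mul fun ξ η => ?_
      rw [Real.dist_eq, dist_eq_norm, Real.coe_toNNReal L hL]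
      exact hLip x ξ η
    exact hlw.continuous
  -- pointwise implication on the good event
  have hmainAE : ∀ᵐ ω ∂μ, ω ∉ T → ω ∈ G := by
    filter_upwards [hfeas, hfin] with ω hfω hbω hωT
    have hdr : wDist Pstar (Phat ω) ≤ r := not_lt.1 hωT
    have hprob : IsProbabilityMeasure (Phat ω) := by rw [hPhat]; exact empMeas_prob hN _
    have hPhatmom : Integrable (fun ξ => ‖ξ‖) (Phat ω) := by
      rw [hPhat]; exact empMeas_integrable hN continuous_norm.stronglyMeasurable _
    set d : ℝ := wDist Pstar (Phat ω) with hd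
    have hdual : ∀ x, |∫ ξ, h x ξ ∂Pstar - ∫ ξ, h x ξ ∂(Phat ω)| ≤ L * d :=
      fun x => abs_integral_sub_le_wDist (hcont x) hL (hLip x) Pstar (Phat ω)
        hPstarmom hPhatmom (hInt x Pstar inferInstance hPstarmom)
        (hInt x (Phat ω) hprob hPhatmom)
    -- feasibility at the empirical measure
    have hEmp : ∫ ξ, h (xhat ω) ξ ∂(Phat ω) ≤ τ ω := by
      have h1 := hfω.2 (Phat ω) hprob hPhatmom
      have h2 : khat ω * wDist (Phat ω) (Phat ω) ≤ 0 :=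
        mul_nonpos_of_nonneg_of_nonpos hfω.1 (wDist_self_nonpos _)
      linarith
    have step1 : ∫ ξ, h (xhat ω) ξ ∂Pstar ≤ τ ω + L * d := by
      have := (abs_le.1 (hdual (xhat ω))).2
      linarith
    have step2 : ∀ x, τ ω ≤ (1 + ε) * (∫ ξ, h x ξ ∂Pstar + L * d) := by
      intro x
      rw [hτ]
      refine mul_le_mul_of_nonneg_left ?_ (by linarith)
      have hle : (⨅ x, ∫ ξ, h x ξ ∂(Phat ω)) ≤ ∫ ξ, h x ξ ∂(Phat ω) := ciInf_le hbω x
      have := (abs_le.1 (hdual x)).1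
      linarith
    have hkey : ∀ x, (∫ ξ, h (xhat ω) ξ ∂Pstar - (2 + ε) * (L * d)) / (1 + ε)
        ≤ ∫ ξ, h x ξ ∂Pstar := by
      intro x
      rw [div_le_iff₀ (by linarith)]
      have h1 := step1
      have h2 := step2 x
      nlinarith
    have hJle : (∫ ξ, h (xhat ω) ξ ∂Pstar - (2 + ε) * (L * d)) / (1 + ε) ≤ J :=
      le_ciInf hkey
    rw [div_le_iff₀ (by linarith : (0:ℝ) < 1 + ε)] at hJle
    have hdL : (2 + ε) * (L * d) ≤ (2 + ε) * (L * r) := by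
      have : L * d ≤ L * r := mul_le_mul_of_nonneg_left hdr hL
      exact mul_le_mul_of_nonneg_left this (by linarith)
    show (∫ ξ, h (xhat ω) ξ ∂Pstar) - J ≤ ε * J + (2 + ε) * L * r
    nlinarith
  -- measure bookkeeping
  obtain ⟨Nset, hNnull, hNsub⟩ := Filter.eventually_iff_exists_mem.1 hmainAE
  have hsub : Set.univ ⊆ G ∪ T ∪ Nsetᶜ := by
    intro ω _
    by_cases hωT : ω ∈ T
    · exact Or.inl (Or.inr hωT)
    · by_cases hωN : ω ∈ Nset
      · exact Or.inl (Or.inl (hNsub ω hωN hωT))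
      · exact Or.inr hωN
  have hNc : μ Nsetᶜ = 0 := by
    have := hNnull
    rwa [MeasureTheory.mem_ae_iff] at this
  have hone : (1 : ENNReal) ≤ μ G + ENNReal.ofReal β := by
    calc (1 : ENNReal) = μ Set.univ := measure_univ.symm
      _ ≤ μ (G ∪ T ∪ Nsetᶜ) := measure_mono hsub
      _ ≤ μ (G ∪ T) + μ Nsetᶜ := measure_union_le _ _
      _ = μ (G ∪ T) := by rw [hNc, add_zero]
      _ ≤ μ G + μ T := measure_union_le _ _
      _ ≤ μ G + ENNReal.ofReal β := by gcongr
  have hadd : ENNReal.ofReal (1 - β) + ENNReal.ofReal β ≤ μ G + ENNReal.ofReal β := by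
    rw [← ENNReal.ofReal_add (by linarith) hβ0.le]
    have : (1 - β) + β = 1 := by ring
    rw [this, ENNReal.ofReal_one]
    exact hone
  exact (ENNReal.add_le_add_iff_right ENNReal.ofReal_ne_top).1 hadd
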